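/- Let θ > 0 and let ν be the geometric distribution ν_n = θ(θ+1)^{-n} on the positive integers. Then for every x ∈ [0,1], Σ_{n=1}^{∞} ν_n p_n(x) = -(θ+x)·log((θ+x)/(θ+1)). Moreover, if 0 < θ ≤ 1/(e-1), the function x ↦ -(θ+x)·log((θ+x)/(θ+1)) attains its maximum over [0,1] at the unique point x* = 1/e - θ(e-1)/e, and the maximum value equals (θ+1)/e. -/

import Mathlib

open Finset Real

/-- `p_n(x) = 1 - x - Σ_{k=2}^{n} (1-x)^k/(k(k-1))`, the winning probability of the
`x`-strategy with `n` items. -/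
noncomputable def pwin (n : ℕ) (x : ℝ) : ℝ :=
  1 - x - ∑ k ∈ Finset.Icc 2 n, (1 - x) ^ k / ((k : ℝ) * ((k : ℝ) - 1))


lemma sumA {t : ℝ} (ht0 : 0 ≤ t) (ht1 : t < 1) :
    HasSum (fun k : ℕ => t ^ k / ((k : ℝ) * ((k : ℝ) - 1))) (t + (1 - t) * Real.log (1 - t)) := by
  have habs : |t| < 1 := abs_lt.2 ⟨by linarith, ht1⟩
  have h1 : HasSum (fun n : ℕ => t ^ (n + 1) / (n + 1)) (-Real.log (1 - t)) :=
    Real.hasSum_pow_div_log_of_abs_lt_one habs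
  have h2 : HasSum (fun n : ℕ => t * (t ^ (n + 1) / (n + 1))) (t * -Real.log (1 - t)) :=
    h1.mul_left t
  have h3 : HasSum (fun n : ℕ => t ^ (n + 1 + 1) / (n + 1 + 1))
      (-Real.log (1 - t) - t) := by
    have := (hasSum_nat_add_iff (f := fun n : ℕ => t ^ (n + 1) / (n + 1)) 1
      (g := -Real.log (1 - t) - t)).2
    simpa using this (by simpa using h1)
  have h4 := h2.sub h3
  have key : (fun n : ℕ => t * (t ^ (n + 1) / (n + 1)) - t ^ (n + 1 + 1) / (n + 1 + 1))
      = fun n : ℕ => t ^ (n + 2) / ((((n:ℕ) + 2 : ℕ) : ℝ) * ((((n:ℕ) + 2 : ℕ) : ℝ) - 1)) := by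
    funext n
    have hn1 : ((n : ℝ) + 1) ≠ 0 := by positivity
    have hn2 : ((n : ℝ) + 2) ≠ 0 := by positivity
    have hq : ((n : ℝ) + 2) * ((n : ℝ) + 2 - 1) ≠ 0 := by
      intro h
      have : ((n:ℝ)+2) * ((n:ℝ)+1) = 0 := by rw [← h]; ring
      rcases mul_eq_zero.1 this with h' | h' <;> [exact hn2 h'; exact hn1 h']
    have e1 : t * (t ^ (n + 1) / ((n:ℝ) + 1)) = t ^ (n + 2) / ((n:ℝ) + 1) := by
      rw [mul_div_assoc', ← pow_succ']
    push_cast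
    rw [e1, div_sub_div _ _ hn1 (by positivity : ((n:ℝ) + 1 + 1) ≠ 0),
      div_eq_div_iff (by positivity) hq]
    ring
  rw [key] at h4
  have hval : t * -Real.log (1 - t) - (-Real.log (1 - t) - t)
      = t + (1 - t) * Real.log (1 - t) := by ring
  rw [hval] at h4
  have := (hasSum_nat_add_iff
      (f := fun k : ℕ => t ^ k / ((k : ℝ) * ((k : ℝ) - 1))) 2
      (g := t + (1 - t) * Real.log (1 - t))).1 h4
  have hzero : ∑ k ∈ range 2, t ^ k / ((k : ℝ) * ((k : ℝ) - 1)) = 0 := by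
    rw [Finset.sum_range_succ, Finset.sum_range_one]
    norm_num
  rw [hzero, add_zero] at this
  exact this

-- telescoping bound
lemma teleLe (m : ℕ) : ∑ k ∈ Finset.Icc 2 m, (1:ℝ)/((k : ℝ) * ((k : ℝ) - 1)) ≤ 1 := by
  rcases Nat.lt_or_ge m 1 with h | h
  · interval_cases m
    simp
  · have key : ∀ m : ℕ, 1 ≤ m → ∑ k ∈ Finset.Icc 2 m, (1:ℝ)/((k : ℝ) * ((k : ℝ) - 1))
        = 1 - 1/(m : ℝ) := by
      intro m hm
      induction m, hm using Nat.le_induction with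
      | base => simp
      | succ n hn ih =>
        rw [Finset.sum_Icc_succ_top (by omega : 2 ≤ n + 1), ih]
        have h1 : (n : ℝ) ≠ 0 := by positivity
        have h2 : ((n : ℝ) + 1) ≠ 0 := by positivity
        push_cast
        field_simp
        ring_nf
        rw [mul_inv_cancel₀ h1]
        ring
    rw [key m h]
    have : 0 < (m : ℝ) := by positivity
    have : 0 < 1/(m:ℝ) := by positivity
    linarith

lemma keyIneq (c u : ℝ) (hc : 0 < c) (hu : 0 < u) :
    -u * Real.log (u / c) ≤ c / Real.exp 1 ∧
    (-u * Real.log (u / c) = c / Real.exp 1 → u = c / Real.exp 1) := by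
  have he : (0:ℝ) < Real.exp 1 := Real.exp_pos 1
  set y := c / (Real.exp 1 * u) with hy
  have hy0 : 0 < y := by positivity
  have hlog : Real.log (u / c) = -(Real.log y + 1) := by
    rw [hy, Real.log_div (ne_of_gt hc) (by positivity),
      Real.log_mul (Real.exp_ne_zero 1) (ne_of_gt hu), Real.log_exp,
      Real.log_div (ne_of_gt hu) (ne_of_gt hc)]
    ring
  have huy : u * y = c / Real.exp 1 := by
    rw [hy]
    field_simp
  have hle : Real.log y ≤ y - 1 := Real.log_le_sub_one_of_pos hy0
  constructor
  · calc -u * Real.log (u / c) = u * (Real.log y + 1) := by rw [hlog]; ring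
      _ ≤ u * ((y - 1) + 1) := by nlinarith
      _ = c / Real.exp 1 := by rw [← huy]; ring
  · intro heq
    by_contra hne
    have hy1 : y ≠ 1 := by
      intro h1
      apply hne
      rw [← huy, h1, mul_one]
    have hlt : Real.log y < y - 1 := Real.log_lt_sub_one_of_pos hy0 hy1
    have : -u * Real.log (u / c) < c / Real.exp 1 := by
      calc -u * Real.log (u / c) = u * (Real.log y + 1) := by rw [hlog]; ring
        _ < u * ((y - 1) + 1) := by nlinarith
        _ = c / Real.exp 1 := by rw [← huy]; ring
    linarith
lemma mainSum (θ x : ℝ) (hθ : 0 < θ) (hx0 : 0 ≤ x) (hx1 : x ≤ 1) :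
    HasSum (fun n : ℕ => θ / (θ + 1) ^ (n + 1) * pwin (n + 1) x)
      (-(θ + x) * Real.log ((θ + x) / (θ + 1))) := by
  have hθ1 : (0:ℝ) < θ + 1 := by linarith
  have hθ1' : (θ:ℝ) + 1 ≠ 0 := ne_of_gt hθ1
  set q : ℝ := (θ + 1)⁻¹ with hqdef
  have hq0 : 0 ≤ q := by positivity
  have hq1 : q < 1 := by
    rw [hqdef, inv_lt_one_iff₀]; right; linarith
  set ν : ℕ → ℝ := fun n => θ * q ^ (n + 1) with hνdef
  have hν0 : ∀ n, 0 ≤ ν n := fun n => by positivity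
  -- geometric sum of ν is 1
  have hνsum : HasSum ν 1 := by
    have h := (hasSum_geometric_of_lt_one hq0 hq1).mul_left (θ * q)
    have e1 : (fun n : ℕ => θ * q * q ^ n) = ν := by
      funext n; rw [hνdef]; ring
    have e2 : θ * q * (1 - q)⁻¹ = 1 := by
      rw [hqdef]
      rw [show 1 - (θ+1)⁻¹ = θ * (θ+1)⁻¹ by field_simp; ring]
      field_simp
    rw [e1, e2] at h
    exact h
  set a : ℕ → ℝ := fun k => (1 - x) ^ k / ((k : ℝ) * ((k : ℝ) - 1)) with hadef
  have ha0 : ∀ k, 0 ≤ a k := by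
    intro k
    match k with
    | 0 => simp [hadef]
    | 1 => simp [hadef]
    | (m+2) =>
      apply div_nonneg (pow_nonneg (by linarith) _)
      have : (0:ℝ) < ((m:ℝ)+2) * (((m:ℝ)+2) - 1) := by nlinarith [Nat.cast_nonneg (α := ℝ) m]
      push_cast
      linarith
  have haLe : ∀ k, a k ≤ 1/((k : ℝ) * ((k : ℝ) - 1)) := by
    intro k
    match k with
    | 0 => simp [hadef]
    | 1 => simp [hadef]
    | (m+2) =>
      have hd : (0:ℝ) < (((m+2:ℕ)) : ℝ) * ((((m+2:ℕ)) : ℝ) - 1) := by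
        push_cast; nlinarith [Nat.cast_nonneg (α := ℝ) m]
      have hnum : (1 - x) ^ (m+2) ≤ 1 := pow_le_one₀ (by linarith) (by linarith)
      show (1 - x) ^ (m+2) / _ ≤ _
      gcongr
  -- partial sums S
  set S : ℕ → ℝ := fun m => ∑ k ∈ Finset.Icc 2 m, a k with hSdef
  have hS0 : ∀ m, 0 ≤ S m := fun m => Finset.sum_nonneg fun k _ => ha0 k
  have hS1 : ∀ m, S m ≤ 1 := fun m =>
    (Finset.sum_le_sum fun k _ => haLe k).trans (teleLe m)
  set tt : ℝ := (1 - x) * q with httdef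
  have htt0 : 0 ≤ tt := by rw [httdef]; exact mul_nonneg (by linarith) hq0
  have htt1 : tt < 1 := by
    have h1 : tt ≤ q := by
      rw [httdef]
      nlinarith
    linarith
  set g : ℕ → ℝ := fun k => (θ + 1) * (tt ^ k / ((k : ℝ) * ((k : ℝ) - 1))) with hgdef
  set F : ℕ × ℕ → ℝ := fun p => if p.2 ∈ Finset.Icc 2 (p.1 + 1) then ν p.1 * a p.2 else 0
    with hFdef
  have hF0 : (0 : ℕ × ℕ → ℝ) ≤ F := by
    intro p
    simp only [hFdef, Pi.zero_apply]
    split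
    · exact mul_nonneg (hν0 _) (ha0 _)
    · exact le_refl _
  -- fibers over n
  have hrow : ∀ n, HasSum (fun k => F (n, k)) (ν n * S (n + 1)) := by
    intro n
    have h : HasSum (fun k => F (n, k)) (∑ k ∈ Finset.Icc 2 (n + 1), F (n, k)) := hasSum_sum_of_ne_finset_zero (f := fun k => F (n, k))
      (s := Finset.Icc 2 (n + 1)) (fun k hk => by simp only [hFdef]; exact if_neg hk)
    have e : ∑ k ∈ Finset.Icc 2 (n + 1), F (n, k) = ν n * S (n + 1) := by
      rw [hSdef, Finset.mul_sum]
      exact Finset.sum_congr rfl fun k hk => by simp only [hFdef]; rw [if_pos hk]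
    rwa [e] at h
  -- fibers over k
  have hcol : ∀ k, HasSum (fun n => F (n, k)) (g k) := by
    intro k
    match k with
    | 0 =>
      have e : (fun n => F (n, 0)) = fun _ => (0:ℝ) := by
        funext n
        simp [hFdef]
      rw [e]
      have : g 0 = 0 := by simp [hgdef]
      rw [this]
      exact hasSum_zero
    | 1 =>
      have e : (fun n => F (n, 1)) = fun _ => (0:ℝ) := by
        funext n
        simp [hFdef]
      rw [e]
      have : g 1 = 0 := by simp [hgdef]
      rw [this]
      exact hasSum_zero
    | (j+2) =>
      have hshift : (fun m : ℕ => F (m + (j + 1), j + 2))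
          = fun m => (θ * q ^ (j + 2) * a (j + 2)) * q ^ m := by
        funext m
        simp only [hFdef]
        rw [if_pos (by simp only [Finset.mem_Icc]; omega)]
        show θ * q ^ (m + (j+1) + 1) * a (j+2) = _
        ring
      have hgeo := (hasSum_geometric_of_lt_one hq0 hq1).mul_left (θ * q ^ (j + 2) * a (j + 2))
      rw [← hshift] at hgeo
      have hval : θ * q ^ (j + 2) * a (j + 2) * (1 - q)⁻¹ = g (j + 2) := by
        have hq' : (1 - q)⁻¹ = (θ + 1) / θ := by
          rw [hqdef]
          rw [show 1 - (θ+1)⁻¹ = θ / (θ+1) by field_simp; ring]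
          rw [inv_div]
        have hc : θ * ((θ+1)/θ) = θ + 1 := by field_simp
        rw [hq', hgdef, hadef, httdef]
        simp only
        rw [mul_pow]
        linear_combination (q ^ (j+2) * ((1-x)^(j+2) /
          ((((j+2:ℕ)):ℝ) * ((((j+2:ℕ)):ℝ) - 1)))) * hc
      rw [hval] at hgeo
      have := (hasSum_nat_add_iff (f := fun n => F (n, j + 2)) (j + 1)).1 hgeo
      have hzero : ∑ i ∈ Finset.range (j + 1), F (i, j + 2) = 0 := by
        apply Finset.sum_eq_zero
        intro i hi
        simp only [hFdef]
        rw [if_neg]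
        simp only [Finset.mem_Icc, not_and, not_le]
        intro _
        have := Finset.mem_range.1 hi
        omega
      rwa [hzero, add_zero] at this
  -- summability of F
  have sF : Summable F := by
    rw [summable_prod_of_nonneg hF0]
    refine ⟨fun n => (hrow n).summable, ?_⟩
    have e : (fun n => ∑' k, F (n, k)) = fun n => ν n * S (n + 1) := by
      funext n; exact (hrow n).tsum_eq
    rw [e]
    apply Summable.of_nonneg_of_le (fun n => mul_nonneg (hν0 n) (hS0 _))
      (fun n => by nlinarith [hS1 (n+1), hν0 n, hS0 (n+1)])
      hνsum.summable
  have hFs : HasSum F (∑' p, F p) := sF.hasSum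
  -- swap
  have hFswap : HasSum (F ∘ (Equiv.prodComm ℕ ℕ)) (∑' p, F p) :=
    (Equiv.prodComm ℕ ℕ).hasSum_iff.2 hFs
  have hgsum : HasSum g (∑' p, F p) := by
    apply hFswap.prod_fiberwise
    intro k
    exact hcol k
  have hg : HasSum g ((θ + 1) * (tt + (1 - tt) * Real.log (1 - tt))) :=
    (sumA htt0 htt1).mul_left (θ + 1)
  have hT : ∑' p, F p = (θ + 1) * (tt + (1 - tt) * Real.log (1 - tt)) := hgsum.unique hg
  have hcols : HasSum (fun n => ν n * S (n + 1))
      ((θ + 1) * (tt + (1 - tt) * Real.log (1 - tt))) := by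
    rw [← hT]
    exact hFs.prod_fiberwise hrow
  have hfinal := (hνsum.mul_right (1 - x)).sub hcols
  have efun : (fun n => ν n * (1 - x) - ν n * S (n + 1))
      = fun n : ℕ => θ / (θ + 1) ^ (n + 1) * pwin (n + 1) x := by
    funext n
    rw [pwin, hSdef, hνdef, hadef]
    simp only
    rw [hqdef, inv_pow, div_eq_mul_inv]
    ring
  rw [efun] at hfinal
  have eval : 1 * (1 - x) - (θ + 1) * (tt + (1 - tt) * Real.log (1 - tt))
      = -(θ + x) * Real.log ((θ + x) / (θ + 1)) := by
    have htte : 1 - tt = (θ + x) / (θ + 1) := by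
      rw [httdef, hqdef]
      field_simp
      ring
    rw [htte, httdef, hqdef]
    field_simp
    ring
  rwa [eval] at hfinal

/-- Against the geometric prior `ν_n = θ(θ+1)^{-n}` (`n ≥ 1`) the `x`-strategy wins with
probability `-(θ+x)log((θ+x)/(θ+1))`; for `0 < θ ≤ 1/(e-1)` the maximum over `x ∈ [0,1]`
is uniquely attained at `x* = 1/e - θ(e-1)/e`, with value `(θ+1)/e`. -/
theorem stmt9 (θ : ℝ) (hθ : 0 < θ) :
    (∀ x ∈ Set.Icc (0:ℝ) 1,
      HasSum (fun n : ℕ => θ / (θ + 1) ^ (n + 1) * pwin (n + 1) x)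
        (-(θ + x) * Real.log ((θ + x) / (θ + 1)))) ∧
    (θ ≤ 1 / (Real.exp 1 - 1) →
      (1 / Real.exp 1 - θ * (Real.exp 1 - 1) / Real.exp 1) ∈ Set.Icc (0:ℝ) 1 ∧
      IsMaxOn (fun x : ℝ => -(θ + x) * Real.log ((θ + x) / (θ + 1))) (Set.Icc (0:ℝ) 1)
        (1 / Real.exp 1 - θ * (Real.exp 1 - 1) / Real.exp 1) ∧
      (∀ y ∈ Set.Icc (0:ℝ) 1,
        IsMaxOn (fun x : ℝ => -(θ + x) * Real.log ((θ + x) / (θ + 1))) (Set.Icc (0:ℝ) 1) y →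
        y = 1 / Real.exp 1 - θ * (Real.exp 1 - 1) / Real.exp 1) ∧
      -(θ + (1 / Real.exp 1 - θ * (Real.exp 1 - 1) / Real.exp 1)) *
          Real.log ((θ + (1 / Real.exp 1 - θ * (Real.exp 1 - 1) / Real.exp 1)) / (θ + 1))
        = (θ + 1) / Real.exp 1) := by
  have hθ1 : (0:ℝ) < θ + 1 := by linarith
  have hE : (0:ℝ) < Real.exp 1 := Real.exp_pos 1
  have hE1 : (1:ℝ) < Real.exp 1 := by
    have := Real.add_one_lt_exp (by norm_num : (1:ℝ) ≠ 0)
    linarith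
  constructor
  · rintro x ⟨hx0, hx1⟩
    exact mainSum θ x hθ hx0 hx1
  · intro hθe
    set E := Real.exp 1 with hEdef
    set xs : ℝ := 1 / E - θ * (E - 1) / E with hxs
    have hθE : θ * (E - 1) ≤ 1 := by
      have h := (le_div_iff₀ (by linarith : (0:ℝ) < E - 1)).1 hθe
      linarith
    have hxs0 : 0 ≤ xs := by
      rw [hxs, show 1 / E - θ * (E - 1) / E = (1 - θ * (E - 1)) / E by ring]
      apply div_nonneg (by linarith) (by linarith)
    have hxs1 : xs ≤ 1 := by
      rw [hxs]
      have h1 : 1 / E ≤ 1 := by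
        rw [div_le_one (by linarith)]; linarith
      have h2 : 0 ≤ θ * (E - 1) / E := div_nonneg (mul_nonneg hθ.le (by linarith)) (by linarith)
      linarith
    have hmem : xs ∈ Set.Icc (0:ℝ) 1 := ⟨hxs0, hxs1⟩
    have hustar : θ + xs = (θ + 1) / E := by
      rw [hxs]
      field_simp
      ring
    have hval : -(θ + xs) * Real.log ((θ + xs) / (θ + 1)) = (θ + 1) / E := by
      rw [hustar, show (θ + 1) / E / (θ + 1) = E⁻¹ by
        field_simp]
      rw [Real.log_inv, hEdef, Real.log_exp]
      ring
    have hub : ∀ x ∈ Set.Icc (0:ℝ) 1,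
        -(θ + x) * Real.log ((θ + x) / (θ + 1)) ≤ (θ + 1) / E := by
      rintro x ⟨hx0, _⟩
      exact (keyIneq (θ + 1) (θ + x) hθ1 (by linarith)).1
    have hmax : IsMaxOn (fun x : ℝ => -(θ + x) * Real.log ((θ + x) / (θ + 1)))
        (Set.Icc (0:ℝ) 1) xs := by
      rw [isMaxOn_iff]
      intro x hx
      calc -(θ + x) * Real.log ((θ + x) / (θ + 1)) ≤ (θ + 1) / E := hub x hx
        _ = -(θ + xs) * Real.log ((θ + xs) / (θ + 1)) := hval.symm
    refine ⟨hmem, hmax, ?_, hval⟩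
    intro y hy hymax
    have h1 : -(θ + y) * Real.log ((θ + y) / (θ + 1)) ≤ (θ + 1) / E := hub y hy
    have h2 : -(θ + xs) * Real.log ((θ + xs) / (θ + 1))
        ≤ -(θ + y) * Real.log ((θ + y) / (θ + 1)) := (isMaxOn_iff.1 hymax) xs hmem
    have heq : -(θ + y) * Real.log ((θ + y) / (θ + 1)) = (θ + 1) / E := by
      rw [hval] at h2
      linarith
    have := (keyIneq (θ + 1) (θ + y) hθ1 (by rcases hy with ⟨hy0, _⟩; linarith)).2 heq
    have : θ + y = θ + xs := by rw [this, hustar]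
    linarith
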